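/- Let J satisfy (J) and define κ(x) := (1/2) ∫_{−δ}^{δ} J(y)(|x−y| − |x|) dy. Then for every continuous function φ : ℝ → ℝ, the convolution κ*φ is twice continuously differentiable on ℝ and (κ*φ)″(x) = (J*φ)(x) − φ(x) for all x ∈ ℝ. -/

import Mathlib

open MeasureTheory Filter Real Set Topology
open scoped Convolution

/-- `κ(x) = (1/2) ∫_{−δ}^{δ} J(y)(|x−y| − |x|) dy`. -/
noncomputable def kappa (J : ℝ → ℝ) (δ : ℝ) : ℝ → ℝ :=
  fun x => (1 / 2) * ∫ y in Set.Icc (-δ) δ, J y * (|x - y| - |x|)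

/-- Convolution `(K*φ)(x) = ∫ K(y) φ(x−y) dy`. -/
noncomputable def convol (K φ : ℝ → ℝ) : ℝ → ℝ := fun x => ∫ y, K y * φ (x - y)

namespace Stmt16Aux

/-- First primitive of `φ`. -/
noncomputable def P1 (φ : ℝ → ℝ) : ℝ → ℝ := fun x => ∫ t in (0:ℝ)..x, φ t

/-- Second primitive of `φ`. -/
noncomputable def P2 (φ : ℝ → ℝ) : ℝ → ℝ := fun x => ∫ t in (0:ℝ)..x, P1 φ t

lemma hasDerivAt_P1 {φ : ℝ → ℝ} (hφ : Continuous φ) (x : ℝ) :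
    HasDerivAt (P1 φ) (φ x) x :=
  intervalIntegral.integral_hasDerivAt_right (hφ.intervalIntegrable _ _)
    (hφ.stronglyMeasurableAtFilter _ _) hφ.continuousAt

lemma continuous_P1 {φ : ℝ → ℝ} (hφ : Continuous φ) : Continuous (P1 φ) := by
  have : Differentiable ℝ (P1 φ) := fun x => (hasDerivAt_P1 hφ x).differentiableAt
  exact this.continuous

lemma hasDerivAt_P2 {φ : ℝ → ℝ} (hφ : Continuous φ) (x : ℝ) :
    HasDerivAt (P2 φ) (P1 φ x) x :=
  intervalIntegral.integral_hasDerivAt_right ((continuous_P1 hφ).intervalIntegrable _ _)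
    ((continuous_P1 hφ).stronglyMeasurableAtFilter _ _) (continuous_P1 hφ).continuousAt

lemma continuous_P2 {φ : ℝ → ℝ} (hφ : Continuous φ) : Continuous (P2 φ) := by
  have : Differentiable ℝ (P2 φ) := fun x => (hasDerivAt_P2 hφ x).differentiableAt
  exact this.continuous

lemma hasDerivAt_comp_sub {F F' : ℝ → ℝ} (hF : ∀ t, HasDerivAt F (F' t) t) (x y : ℝ) :
    HasDerivAt (fun y => F (x - y)) (-F' (x - y)) y := by
  have h1 : HasDerivAt (fun y : ℝ => x - y) (-1) y := by
    simpa using (hasDerivAt_id y).const_sub x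
  have := (hF (x - y)).comp y h1
  simpa [mul_comm, Function.comp_def] using this

/-- `∫ y in a..b, φ(x−y) = P1 φ (x−a) − P1 φ (x−b)`. -/
lemma int_phi {φ : ℝ → ℝ} (hφ : Continuous φ) (x a b : ℝ) :
    ∫ y in a..b, φ (x - y) = P1 φ (x - a) - P1 φ (x - b) := by
  have hder : ∀ y ∈ uIcc a b, HasDerivAt (fun y => -(P1 φ (x - y))) (φ (x - y)) y := by
    intro y _
    have := (hasDerivAt_comp_sub (hasDerivAt_P1 hφ) x y).neg
    rw [neg_neg] at this
    exact this
  have hint : IntervalIntegrable (fun y => φ (x - y)) volume a b :=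
    (hφ.comp (continuous_const.sub continuous_id)).intervalIntegrable a b
  have := intervalIntegral.integral_eq_sub_of_hasDerivAt hder hint
  rw [this]; ring

/-- Antiderivative of `(c − 2y) φ(x−y)`. -/
lemma int_linphi {φ : ℝ → ℝ} (hφ : Continuous φ) (x c a b : ℝ) :
    ∫ y in a..b, (c - 2*y) * φ (x - y)
      = ((2*b - c) * P1 φ (x - b) + 2 * P2 φ (x - b))
        - ((2*a - c) * P1 φ (x - a) + 2 * P2 φ (x - a)) := by
  have hder : ∀ y ∈ uIcc a b,
      HasDerivAt (fun y => (2*y - c) * P1 φ (x - y) + 2 * P2 φ (x - y))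
        ((c - 2*y) * φ (x - y)) y := by
    intro y _
    have h1 := hasDerivAt_comp_sub (hasDerivAt_P1 hφ) x y
    have h2 := hasDerivAt_comp_sub (hasDerivAt_P2 hφ) x y
    have h3 : HasDerivAt (fun y : ℝ => 2*y - c) 2 y := by
      simpa using ((hasDerivAt_id y).const_mul 2).sub_const c
    have := (h3.mul h1).add (h2.const_mul 2)
    refine HasDerivAt.congr_deriv this ?_
    ring
  have hint : IntervalIntegrable (fun y => (c - 2*y) * φ (x - y)) volume a b := by
    apply Continuous.intervalIntegrable
    exact (continuous_const.sub (continuous_const.mul continuous_id)).mul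
      (hφ.comp (continuous_const.sub continuous_id))
  exact intervalIntegral.integral_eq_sub_of_hasDerivAt hder hint

lemma cont_integrand {φ : ℝ → ℝ} (hφ : Continuous φ) (x z : ℝ) :
    Continuous (fun y => (|y - z| - |y|) * φ (x - y)) := by
  exact ((continuous_abs.comp (continuous_id.sub continuous_const)).sub
    continuous_abs).mul (hφ.comp (continuous_const.sub continuous_id))

/-- Key computation. -/
lemma key1 {φ : ℝ → ℝ} (hφ : Continuous φ) {δ : ℝ} (hδ : 0 < δ) (x z : ℝ)
    (hz : z ∈ Icc (-δ) δ) :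
    ∫ y in (-δ)..δ, (|y - z| - |y|) * φ (x - y)
      = z * (P1 φ (x - δ) + P1 φ (x + δ)) + 2 * (P2 φ (x - z) - P2 φ x) := by
  obtain ⟨hz1, hz2⟩ := hz
  have hii : ∀ a b : ℝ, IntervalIntegrable (fun y => (|y - z| - |y|) * φ (x - y)) volume a b :=
    fun a b => (cont_integrand hφ x z).intervalIntegrable a b
  rcases le_or_gt 0 z with hz0 | hz0
  · -- split at 0 and z
    have hsplit2 : ∫ y in (0:ℝ)..δ, (|y - z| - |y|) * φ (x - y)
        = (∫ y in (0:ℝ)..z, (|y - z| - |y|) * φ (x - y))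
          + ∫ y in z..δ, (|y - z| - |y|) * φ (x - y) :=
      (intervalIntegral.integral_add_adjacent_intervals (hii 0 z) (hii z δ)).symm
    have hsplit1 : ∫ y in (-δ)..δ, (|y - z| - |y|) * φ (x - y)
        = (∫ y in (-δ)..(0:ℝ), (|y - z| - |y|) * φ (x - y))
          + ∫ y in (0:ℝ)..δ, (|y - z| - |y|) * φ (x - y) :=
      (intervalIntegral.integral_add_adjacent_intervals (hii (-δ) 0) (hii 0 δ)).symm
    have e1 : ∫ y in (-δ)..(0:ℝ), (|y - z| - |y|) * φ (x - y)
        = z * (P1 φ (x + δ) - P1 φ x) := by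
      have : ∫ y in (-δ)..(0:ℝ), (|y - z| - |y|) * φ (x - y)
          = ∫ y in (-δ)..(0:ℝ), z * φ (x - y) := by
        apply intervalIntegral.integral_congr
        intro y hy
        rw [Set.uIcc_of_le (by linarith : (-δ:ℝ) ≤ 0)] at hy
        obtain ⟨hy1, hy2⟩ := hy
        simp only []
        rw [abs_of_nonpos (by linarith : y - z ≤ 0), abs_of_nonpos hy2]
        ring
      rw [this, intervalIntegral.integral_const_mul, int_phi hφ]
      rw [show x - -δ = x + δ by ring, sub_zero]
    have e2 : ∫ y in (0:ℝ)..z, (|y - z| - |y|) * φ (x - y)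
        = (z * P1 φ (x - z) + 2 * P2 φ (x - z)) - (-z * P1 φ x + 2 * P2 φ x) := by
      have : ∫ y in (0:ℝ)..z, (|y - z| - |y|) * φ (x - y)
          = ∫ y in (0:ℝ)..z, (z - 2*y) * φ (x - y) := by
        apply intervalIntegral.integral_congr
        intro y hy
        rw [Set.uIcc_of_le hz0] at hy
        obtain ⟨hy1, hy2⟩ := hy
        simp only []
        rw [abs_of_nonpos (by linarith : y - z ≤ 0), abs_of_nonneg hy1]
        ring
      rw [this, int_linphi hφ]
      rw [sub_zero]
      ring
    have e3 : ∫ y in z..δ, (|y - z| - |y|) * φ (x - y)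
        = -z * (P1 φ (x - z) - P1 φ (x - δ)) := by
      have : ∫ y in z..δ, (|y - z| - |y|) * φ (x - y)
          = ∫ y in z..δ, (-z) * φ (x - y) := by
        apply intervalIntegral.integral_congr
        intro y hy
        rw [Set.uIcc_of_le hz2] at hy
        obtain ⟨hy1, hy2⟩ := hy
        simp only []
        rw [abs_of_nonneg (by linarith : 0 ≤ y - z), abs_of_nonneg (by linarith : (0:ℝ) ≤ y)]
        ring
      rw [this, intervalIntegral.integral_const_mul, int_phi hφ]
    rw [hsplit1, hsplit2, e1, e2, e3]
    ring
  · -- z < 0 : split at z and 0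
    have hsplit2 : ∫ y in (-δ)..(0:ℝ), (|y - z| - |y|) * φ (x - y)
        = (∫ y in (-δ)..z, (|y - z| - |y|) * φ (x - y))
          + ∫ y in z..(0:ℝ), (|y - z| - |y|) * φ (x - y) :=
      (intervalIntegral.integral_add_adjacent_intervals (hii (-δ) z) (hii z 0)).symm
    have hsplit1 : ∫ y in (-δ)..δ, (|y - z| - |y|) * φ (x - y)
        = (∫ y in (-δ)..(0:ℝ), (|y - z| - |y|) * φ (x - y))
          + ∫ y in (0:ℝ)..δ, (|y - z| - |y|) * φ (x - y) :=
      (intervalIntegral.integral_add_adjacent_intervals (hii (-δ) 0) (hii 0 δ)).symm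
    have e1 : ∫ y in (-δ)..z, (|y - z| - |y|) * φ (x - y)
        = z * (P1 φ (x + δ) - P1 φ (x - z)) := by
      have : ∫ y in (-δ)..z, (|y - z| - |y|) * φ (x - y)
          = ∫ y in (-δ)..z, z * φ (x - y) := by
        apply intervalIntegral.integral_congr
        intro y hy
        rw [Set.uIcc_of_le hz1] at hy
        obtain ⟨hy1, hy2⟩ := hy
        simp only []
        rw [abs_of_nonpos (by linarith : y - z ≤ 0), abs_of_nonpos (by linarith : y ≤ 0)]
        ring
      rw [this, intervalIntegral.integral_const_mul, int_phi hφ]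
      rw [show x - -δ = x + δ by ring]
    have e2 : ∫ y in z..(0:ℝ), (|y - z| - |y|) * φ (x - y)
        = ((2*z - z) * P1 φ (x - z) + 2 * P2 φ (x - z)) - (-z * P1 φ x + 2 * P2 φ x) := by
      have : ∫ y in z..(0:ℝ), (|y - z| - |y|) * φ (x - y)
          = ∫ y in z..(0:ℝ), -((z - 2*y) * φ (x - y)) := by
        apply intervalIntegral.integral_congr
        intro y hy
        rw [Set.uIcc_of_le (le_of_lt hz0)] at hy
        obtain ⟨hy1, hy2⟩ := hy
        simp only []
        rw [abs_of_nonneg (by linarith : 0 ≤ y - z), abs_of_nonpos hy2]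
        ring
      rw [this, intervalIntegral.integral_neg, int_linphi hφ]
      rw [sub_zero]
      ring
    have e3 : ∫ y in (0:ℝ)..δ, (|y - z| - |y|) * φ (x - y)
        = -z * (P1 φ x - P1 φ (x - δ)) := by
      have : ∫ y in (0:ℝ)..δ, (|y - z| - |y|) * φ (x - y)
          = ∫ y in (0:ℝ)..δ, (-z) * φ (x - y) := by
        apply intervalIntegral.integral_congr
        intro y hy
        rw [Set.uIcc_of_le (le_of_lt hδ)] at hy
        obtain ⟨hy1, hy2⟩ := hy
        simp only []
        rw [abs_of_nonneg (by linarith : 0 ≤ y - z), abs_of_nonneg hy1]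
        ring
      rw [this, intervalIntegral.integral_const_mul, int_phi hφ, sub_zero]
    rw [hsplit1, hsplit2, e1, e2, e3]
    ring


section MainLemmas

variable {J φ : ℝ → ℝ} {δ : ℝ}

lemma odd_moment (hδ : 0 < δ) (hJeven : ∀ x, J (-x) = J x) :
    ∫ z in Icc (-δ) δ, z * J z = 0 := by
  have h1 : ∫ z in Icc (-δ) δ, z * J z = ∫ z in (-δ)..δ, z * J z := by
    rw [intervalIntegral.integral_of_le (by linarith : -δ ≤ δ), integral_Icc_eq_integral_Ioc]
  have h2 : (∫ x in (-δ)..δ, (-x) * J (-x)) = ∫ x in (-δ)..δ, x * J x := by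
    simpa using intervalIntegral.integral_comp_neg (a := -δ) (b := δ) (f := fun z => z * J z)
  have h3 : (∫ x in (-δ)..δ, (-x) * J (-x)) = -∫ x in (-δ)..δ, x * J x := by
    rw [← intervalIntegral.integral_neg]
    apply intervalIntegral.integral_congr
    intro y _
    simp only []
    rw [hJeven]
    ring
  rw [h1]
  linarith [h2, h3.symm.trans h2]

lemma vanish_int (hδ : 0 < δ) {f : ℝ → ℝ} (h0 : ∀ y ∉ Icc (-δ) δ, f y = 0) :
    ∫ y, f y = ∫ y in (-δ)..δ, f y := by
  rw [← setIntegral_eq_integral_of_forall_compl_eq_zero h0,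
    intervalIntegral.integral_of_le (by linarith : -δ ≤ δ), integral_Icc_eq_integral_Ioc]

lemma kappa_vanish (hδ : 0 < δ) (hJeven : ∀ x, J (-x) = J x) :
    ∀ y ∉ Icc (-δ) δ, kappa J δ y = 0 := by
  intro y hy
  rw [mem_Icc] at hy
  push_neg at hy
  unfold kappa
  rcases lt_or_ge y (-δ) with hc | hc
  · have he : ∀ z ∈ Icc (-δ) δ, J z * (|y - z| - |y|) = z * J z := by
      intro z hz
      rw [mem_Icc] at hz
      rw [abs_of_nonpos (by linarith : y - z ≤ 0), abs_of_nonpos (by linarith : y ≤ 0)]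
      ring
    rw [setIntegral_congr_fun measurableSet_Icc he, odd_moment hδ hJeven, mul_zero]
  · have hyδ : δ < y := hy hc
    have he : ∀ z ∈ Icc (-δ) δ, J z * (|y - z| - |y|) = -(z * J z) := by
      intro z hz
      rw [mem_Icc] at hz
      rw [abs_of_nonneg (by linarith : (0:ℝ) ≤ y - z), abs_of_nonneg (by linarith : (0:ℝ) ≤ y)]
      ring
    rw [setIntegral_congr_fun measurableSet_Icc he, integral_neg, odd_moment hδ hJeven]
    simp

lemma J_boundary (hδ : 0 < δ) (hJcont : Continuous J)
    (h0 : ∀ y ∉ Icc (-δ) δ, J y = 0) : J δ = 0 ∧ J (-δ) = 0 := by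
  constructor
  · have t1 : Tendsto J (𝓝[>] δ) (𝓝 (J δ)) := (hJcont.tendsto δ).mono_left nhdsWithin_le_nhds
    have t2 : Tendsto J (𝓝[>] δ) (𝓝 0) := by
      refine Tendsto.congr' ?_ tendsto_const_nhds
      filter_upwards [self_mem_nhdsWithin] with z hz
      rw [mem_Ioi] at hz
      exact (h0 z (by rw [mem_Icc]; push_neg; intro; linarith)).symm
    exact tendsto_nhds_unique t1 t2
  · have t1 : Tendsto J (𝓝[<] (-δ)) (𝓝 (J (-δ))) :=
      (hJcont.tendsto (-δ)).mono_left nhdsWithin_le_nhds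
    have t2 : Tendsto J (𝓝[<] (-δ)) (𝓝 0) := by
      refine Tendsto.congr' ?_ tendsto_const_nhds
      filter_upwards [self_mem_nhdsWithin] with z hz
      rw [mem_Iio] at hz
      exact (h0 z (by rw [mem_Icc]; push_neg; intro; linarith)).symm
    exact tendsto_nhds_unique t1 t2

/-- Integration by parts: `∫ J' y G(x−y) dy = ∫ J y G'(x−y) dy` when `J` vanishes at `±δ`. -/
lemma ibp_conv (hδ : 0 < δ) (hJC1 : ContDiff ℝ 1 J)
    (hJ0 : ∀ y ∉ Icc (-δ) δ, J y = 0) (hJ'0 : ∀ y ∉ Icc (-δ) δ, deriv J y = 0)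
    {G G' : ℝ → ℝ} (hG : ∀ t, HasDerivAt G (G' t) t)
    (hGc : Continuous G) (hG'c : Continuous G') (x : ℝ) :
    convol (deriv J) G x = convol J G' x := by
  have hJcont : Continuous J := hJC1.continuous
  have hJ'cont : Continuous (deriv J) := hJC1.continuous_deriv le_rfl
  obtain ⟨hJδ, hJmδ⟩ := J_boundary hδ hJcont hJ0
  have h1 : convol (deriv J) G x = ∫ y in (-δ)..δ, deriv J y * G (x - y) :=
    vanish_int hδ (fun y hy => by rw [hJ'0 y hy, zero_mul])
  have h2 : convol J G' x = ∫ y in (-δ)..δ, J y * G' (x - y) :=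
    vanish_int hδ (fun y hy => by rw [hJ0 y hy, zero_mul])
  have hder : ∀ y ∈ uIcc (-δ) δ, HasDerivAt (fun y => J y * G (x - y))
      (deriv J y * G (x - y) + J y * -(G' (x - y))) y := fun y _ =>
    ((hJC1.differentiable one_ne_zero y).hasDerivAt).mul (hasDerivAt_comp_sub hG x y)
  have hint1 : IntervalIntegrable (fun y => deriv J y * G (x - y)) volume (-δ) δ :=
    (hJ'cont.mul (hGc.comp (continuous_const.sub continuous_id))).intervalIntegrable _ _
  have hint2 : IntervalIntegrable (fun y => J y * -(G' (x - y))) volume (-δ) δ :=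
    (hJcont.mul ((hG'c.comp (continuous_const.sub continuous_id)).neg)).intervalIntegrable _ _
  have hFTC := intervalIntegral.integral_eq_sub_of_hasDerivAt hder (hint1.add hint2)
  simp only [hJδ, hJmδ, zero_mul, sub_zero] at hFTC
  rw [intervalIntegral.integral_add hint1 hint2] at hFTC
  have h3 : ∫ y in (-δ)..δ, J y * -(G' (x - y)) = -∫ y in (-δ)..δ, J y * G' (x - y) := by
    rw [← intervalIntegral.integral_neg]
    apply intervalIntegral.integral_congr
    intro y _
    simp only []
    ring
  rw [h1, h2]
  rw [h3] at hFTC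
  linarith

/-- The main identity: `κ*φ = J*P2φ − P2φ`. -/
lemma main_id (hδ : 0 < δ) (hJC1 : ContDiff ℝ 1 J) (hJeven : ∀ x, J (-x) = J x)
    (hJ0 : ∀ y ∉ Icc (-δ) δ, J y = 0) (hJint : (∫ y, J y) = 1)
    (hφ : Continuous φ) (x : ℝ) :
    convol (kappa J δ) φ x = convol J (P2 φ) x - P2 φ x := by
  have hJcont : Continuous J := hJC1.continuous
  set G : ℝ → ℝ → ℝ := fun y z => (J z * (|y - z| - |y|)) * (φ (x - y) * (1/2)) with hG
  have h1 : convol (kappa J δ) φ x = ∫ y in Icc (-δ) δ, kappa J δ y * φ (x - y) :=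
    (setIntegral_eq_integral_of_forall_compl_eq_zero
      (fun y hy => by rw [kappa_vanish hδ hJeven y hy, zero_mul])).symm
  have h2 : ∀ y : ℝ, kappa J δ y * φ (x - y) = ∫ z in Icc (-δ) δ, G y z := by
    intro y
    unfold kappa
    rw [hG]
    rw [MeasureTheory.integral_mul_const (φ (x - y) * (1/2)) (fun z => J z * (|y - z| - |y|))]
    ring
  have hGcont : Continuous (Function.uncurry G) := by
    apply Continuous.mul
    · exact (hJcont.comp continuous_snd).mul
        (((continuous_fst.sub continuous_snd).abs).sub (continuous_fst.abs))
    · exact ((hφ.comp (continuous_const.sub continuous_fst)).mul continuous_const)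
  have hGint : Integrable (Function.uncurry G)
      ((volume.restrict (Icc (-δ) δ)).prod (volume.restrict (Icc (-δ) δ))) := by
    rw [Measure.prod_restrict, ← Measure.volume_eq_prod]
    exact (hGcont.continuousOn).integrableOn_compact (isCompact_Icc.prod isCompact_Icc)
  have h3 : (∫ y in Icc (-δ) δ, ∫ z in Icc (-δ) δ, G y z)
      = ∫ z in Icc (-δ) δ, ∫ y in Icc (-δ) δ, G y z := integral_integral_swap hGint
  have h4 : ∀ z ∈ Icc (-δ) δ, (∫ y in Icc (-δ) δ, G y z)
      = (((1/2) * (P1 φ (x - δ) + P1 φ (x + δ))) * (z * J z)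
        + J z * P2 φ (x - z)) - P2 φ x * J z := by
    intro z hz
    have e1 : (∫ y in Icc (-δ) δ, G y z) = ∫ y in (-δ)..δ, G y z := by
      rw [intervalIntegral.integral_of_le (by linarith : -δ ≤ δ), integral_Icc_eq_integral_Ioc]
    have e2 : (fun y => G y z) = fun y => (J z * (1/2)) * ((|y - z| - |y|) * φ (x - y)) := by
      funext y
      rw [hG]
      ring
    rw [e1, e2, intervalIntegral.integral_const_mul, key1 hφ hδ x z hz]
    ring
  have hJ1 : ∫ z in Icc (-δ) δ, J z = 1 := by
    rw [setIntegral_eq_integral_of_forall_compl_eq_zero hJ0]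
    exact hJint
  have hconv2 : convol J (P2 φ) x = ∫ z in Icc (-δ) δ, J z * P2 φ (x - z) :=
    (setIntegral_eq_integral_of_forall_compl_eq_zero
      (fun z hz => by rw [hJ0 z hz, zero_mul])).symm
  have i1 : IntegrableOn (fun z => ((1/2) * (P1 φ (x - δ) + P1 φ (x + δ))) * (z * J z))
      (Icc (-δ) δ) volume :=
    (continuous_const.mul (continuous_id.mul hJcont)).integrableOn_Icc
  have i2 : IntegrableOn (fun z => J z * P2 φ (x - z)) (Icc (-δ) δ) volume :=
    (hJcont.mul ((continuous_P2 hφ).comp (continuous_const.sub continuous_id))).integrableOn_Icc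
  have i3 : IntegrableOn (fun z => P2 φ x * J z) (Icc (-δ) δ) volume :=
    (continuous_const.mul hJcont).integrableOn_Icc
  rw [h1]
  rw [setIntegral_congr_fun measurableSet_Icc (fun y _ => h2 y)]
  rw [h3]
  rw [setIntegral_congr_fun measurableSet_Icc h4]
  have i12 : IntegrableOn (fun z => ((1/2) * (P1 φ (x - δ) + P1 φ (x + δ))) * (z * J z)
      + J z * P2 φ (x - z)) (Icc (-δ) δ) volume := i1.add i2
  rw [integral_sub i12 i3, integral_add i1 i2, integral_const_mul, integral_const_mul,
    odd_moment hδ hJeven, hJ1, hconv2]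
  ring

end MainLemmas

end Stmt16Aux

/-- for every continuous `φ`, the convolution `κ*φ` is `C²` and
`(κ*φ)″ = J*φ − φ` on `ℝ`. -/
theorem stmt16 (J : ℝ → ℝ) (δ : ℝ) (hδ : 0 < δ)
    (hJC1 : ContDiff ℝ 1 J) (hJnonneg : ∀ x, 0 ≤ J x)
    (hJeven : ∀ x, J (-x) = J x) (hJanti : AntitoneOn J (Set.Ici 0))
    (hJsupp : tsupport J = Set.Icc (-δ) δ) (hJint : (∫ y, J y) = 1) :
    ∀ φ : ℝ → ℝ, Continuous φ →
      ContDiff ℝ 2 (convol (kappa J δ) φ) ∧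
      ∀ x : ℝ, deriv (deriv (convol (kappa J δ) φ)) x = convol J φ x - φ x := by
  intro φ hφ
  open Stmt16Aux in
  have hJcont : Continuous J := hJC1.continuous
  have hJ0 : ∀ y ∉ Icc (-δ) δ, J y = 0 := fun y hy =>
    image_eq_zero_of_notMem_tsupport (by rw [hJsupp]; exact hy)
  have hJ'0 : ∀ y ∉ Icc (-δ) δ, deriv J y = 0 := by
    intro y hy
    by_contra h
    exact hy (hJsupp ▸ support_deriv_subset (Function.mem_support.mpr h))
  have hJcs : HasCompactSupport J := by
    rw [HasCompactSupport, hJsupp]; exact isCompact_Icc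
  have hconv_eq : ∀ f g : ℝ → ℝ, convol f g = f ⋆[ContinuousLinearMap.mul ℝ ℝ, volume] g := by
    intro f g
    funext x
    simp [convol, convolution_def]
  -- first derivative
  have d1 : ∀ x, HasDerivAt (convol J (P2 φ))
      (convol (deriv J) (P2 φ) x) x := by
    intro x
    rw [hconv_eq, hconv_eq]
    exact hJcs.hasDerivAt_convolution_left (ContinuousLinearMap.mul ℝ ℝ) hJC1
      ((continuous_P2 hφ).locallyIntegrable) x
  have e1 : ∀ x, convol (deriv J) (P2 φ) x = convol J (P1 φ) x := fun x =>
    ibp_conv hδ hJC1 hJ0 hJ'0 (hasDerivAt_P2 hφ) (continuous_P2 hφ) (continuous_P1 hφ) x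
  have d2 : ∀ x, HasDerivAt (convol J (P1 φ))
      (convol (deriv J) (P1 φ) x) x := by
    intro x
    rw [hconv_eq, hconv_eq]
    exact hJcs.hasDerivAt_convolution_left (ContinuousLinearMap.mul ℝ ℝ) hJC1
      ((continuous_P1 hφ).locallyIntegrable) x
  have e2 : ∀ x, convol (deriv J) (P1 φ) x = convol J φ x := fun x =>
    ibp_conv hδ hJC1 hJ0 hJ'0 (hasDerivAt_P1 hφ) (continuous_P1 hφ) hφ x
  have hcont : Continuous (convol J φ) := by
    rw [hconv_eq]
    exact hJcs.continuous_convolution_left _ hJcont (hφ.locallyIntegrable)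
  -- the identity
  have hid : convol (kappa J δ) φ = fun x => convol J (P2 φ) x - P2 φ x :=
    funext (main_id hδ hJC1 hJeven hJ0 hJint hφ)
  have hfg : ∀ x, HasDerivAt (convol (kappa J δ) φ) (convol J (P1 φ) x - P1 φ x) x := by
    intro x
    rw [hid]
    exact ((e1 x ▸ d1 x)).sub (hasDerivAt_P2 hφ x)
  have hderiv1 : deriv (convol (kappa J δ) φ) = fun x => convol J (P1 φ) x - P1 φ x :=
    funext fun x => (hfg x).deriv
  have hgh : ∀ x, HasDerivAt (fun x => convol J (P1 φ) x - P1 φ x)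
      (convol J φ x - φ x) x := by
    intro x
    exact ((e2 x ▸ d2 x)).sub (hasDerivAt_P1 hφ x)
  have hderiv2 : deriv (fun x => convol J (P1 φ) x - P1 φ x) = fun x => convol J φ x - φ x :=
    funext fun x => (hgh x).deriv
  constructor
  · have h2 : ContDiff ℝ (1 + 1) (convol (kappa J δ) φ) := by
      rw [contDiff_succ_iff_deriv]
      refine ⟨fun x => (hfg x).differentiableAt, by simp, ?_⟩
      rw [hderiv1, contDiff_one_iff_deriv]
      refine ⟨fun x => (hgh x).differentiableAt, ?_⟩
      rw [hderiv2]
      exact hcont.sub hφ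
    exact_mod_cast h2
  · intro x
    rw [hderiv1, hderiv2]
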